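/- Let ψ̂_f := 1_{[−π,π]} be the indicator of [−π,π] (the Fourier transform of the Shannon father wavelet sinc(πt)) and for c > 0 set I(c) := ∫_{−cπ}^{cπ} ( Σ_{n∈ℤ} 1_{[−π,π]}(η + 2ncπ) )² dη. Then I(c) = 2π for c ≥ 1, and for 0 < c < 1, writing n* := ⌊(1−c)/(2c)⌋ and η* := π(1 − 2c(1 + n*)), one has I(c) = 2|η*| (2n* + 2 + sign(η*))² + 2(cπ − |η*|)(2n* + 2)². -/

import Mathlib

open MeasureTheory

/-- The indicator of `[−π,π]`, i.e. the Fourier transform of the Shannon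
father wavelet `sinc(πt)`. -/
noncomputable def shannonHat (η : ℝ) : ℝ :=
  if η ∈ Set.Icc (-Real.pi) Real.pi then 1 else 0

/-- `I(c) = ∫_{−cπ}^{cπ} (Σ_{n∈ℤ} 1_{[−π,π]}(η+2ncπ))² dη`. -/
noncomputable def shannonI (c : ℝ) : ℝ :=
  ∫ η in (-(c * Real.pi))..(c * Real.pi),
    (∑' n : ℤ, shannonHat (η + 2 * (n : ℝ) * c * Real.pi)) ^ 2

lemma tsum_eq_card (c η : ℝ) (hc : 0 < c) :
    (∑' n : ℤ, shannonHat (η + 2 * (n : ℝ) * c * Real.pi)) =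
      ((Finset.Icc (-⌊(Real.pi + η) / (2 * c * Real.pi)⌋)
          ⌊(Real.pi - η) / (2 * c * Real.pi)⌋).card : ℝ) := by
  have hπ := Real.pi_pos
  have hpos : (0:ℝ) < 2 * c * Real.pi := by positivity
  set s : Finset ℤ := Finset.Icc (-⌊(Real.pi + η) / (2 * c * Real.pi)⌋)
      ⌊(Real.pi - η) / (2 * c * Real.pi)⌋ with hs
  have key : ∀ n : ℤ, shannonHat (η + 2 * (n : ℝ) * c * Real.pi)
      = if n ∈ s then (1:ℝ) else 0 := by
    intro n
    have e1 : -⌊(Real.pi + η) / (2 * c * Real.pi)⌋ ≤ n ↔ -Real.pi ≤ η + 2 * (n : ℝ) * c * Real.pi := by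
      rw [neg_le, Int.le_floor]
      push_cast
      rw [le_div_iff₀ hpos]
      constructor <;> intro h <;> nlinarith
    have e2 : n ≤ ⌊(Real.pi - η) / (2 * c * Real.pi)⌋ ↔ η + 2 * (n : ℝ) * c * Real.pi ≤ Real.pi := by
      rw [Int.le_floor, le_div_iff₀ hpos]
      constructor <;> intro h <;> nlinarith
    have hiff : (η + 2 * (n : ℝ) * c * Real.pi ∈ Set.Icc (-Real.pi) Real.pi) ↔ n ∈ s := by
      rw [Set.mem_Icc, hs, Finset.mem_Icc, e1, e2, and_comm]
    rw [shannonHat, if_congr hiff rfl rfl]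
  rw [tsum_eq_sum (s := s) (fun n hn => by rw [key n, if_neg hn])]
  rw [Finset.sum_congr rfl (fun n hn => by rw [key n, if_pos hn])]
  rw [Finset.sum_const, nsmul_eq_mul, mul_one]

lemma card_Icc_real (lo hi : ℤ) (h : lo ≤ hi) :
    ((Finset.Icc lo hi).card : ℝ) = (hi : ℝ) - lo + 1 := by
  have h2 : ((Finset.Icc lo hi).card : ℤ) = hi + 1 - lo := by
    rw [Int.card_Icc]; omega
  have h3 : ((Finset.Icc lo hi).card : ℝ) = (hi : ℝ) + 1 - lo := by exact_mod_cast h2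
  linarith

/-- Generic piecewise-constant integral computation. -/
lemma integral_helper (f : ℝ → ℝ) (c h A B : ℝ) (hc : 0 < c) (h0 : 0 ≤ h)
    (hh : h ≤ c * Real.pi)
    (hmid : ∀ η : ℝ, -h < η → η < h → f η = A)
    (hout : ∀ η : ℝ, -(c * Real.pi) < η → η < c * Real.pi → h < |η| → f η = B) :
    ∫ η in (-(c * Real.pi))..(c * Real.pi), f η
      = 2 * h * A + (2 * c * Real.pi - 2 * h) * B := by
  have hπ := Real.pi_pos
  have hcc : -(c * Real.pi) ≤ c * Real.pi := by nlinarith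
  rw [intervalIntegral.integral_of_le hcc]
  set S : Set ℝ := Set.Ioc (-(c * Real.pi)) (c * Real.pi) with hS
  set T : Set ℝ := Set.Ioo (-h) h with hT
  have hsub : T ⊆ S := by
    rintro x ⟨hx1, hx2⟩; exact ⟨by linarith, by linarith⟩
  set G : ℝ → ℝ := fun η => B + T.indicator (fun _ => A - B) η with hG
  have hae : ∀ᵐ η ∂volume, η ∈ S → f η = G η := by
    have hne : ∀ᵐ η : ℝ ∂volume, η ∉ ({-h, h, c * Real.pi} : Set ℝ) := by
      refine (ae_iff.mpr ?_)
      simp only [not_not]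
      refine measure_mono_null (fun x hx => hx) ?_
      have : (({-h, h, c * Real.pi} : Set ℝ)) = {-h} ∪ {h} ∪ {c * Real.pi} := by
        ext x
        simp only [Set.mem_insert_iff, Set.mem_singleton_iff, Set.mem_union]
        tauto
      rw [this]
      refine le_antisymm ?_ zero_le
      calc volume ({-h} ∪ {h} ∪ ({c * Real.pi} : Set ℝ))
          ≤ volume ({-h} : Set ℝ) + volume ({h} : Set ℝ) + volume ({c * Real.pi} : Set ℝ) := by
            refine le_trans (measure_union_le _ _) ?_
            gcongr
            exact measure_union_le _ _
        _ = 0 := by simp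
    filter_upwards [hne] with η hη hηS
    simp only [Set.mem_insert_iff, Set.mem_singleton_iff, not_or] at hη
    obtain ⟨hη1, hη2, hη3⟩ := hη
    obtain ⟨hS1, hS2⟩ := hηS
    by_cases hmem : η ∈ T
    · obtain ⟨ht1, ht2⟩ := hmem
      rw [hG]
      simp only [Set.indicator_of_mem (by exact ⟨ht1, ht2⟩ : η ∈ T)]
      rw [hmid η ht1 ht2]; ring
    · rw [hG]
      simp only [Set.indicator_of_notMem hmem]
      have hout' : h < |η| := by
        rw [hT, Set.mem_Ioo, not_and_or] at hmem
        push_neg at hmem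
        rcases hmem with hm | hm
        · have hlt : η < -h := lt_of_le_of_ne hm hη1
          calc h < -η := by linarith
            _ ≤ |η| := neg_le_abs η
        · have hlt : h < η := lt_of_le_of_ne hm (fun e => hη2 e.symm)
          exact lt_of_lt_of_le hlt (le_abs_self η)
      rw [hout η hS1 (lt_of_le_of_ne hS2 hη3) hout', add_zero]
  rw [setIntegral_congr_ae measurableSet_Ioc hae]
  have hint1 : IntegrableOn (fun _ : ℝ => B) S volume :=
    integrableOn_const measure_Ioc_lt_top.ne
  have hint2 : Integrable (fun η => T.indicator (fun _ => A - B) η) (volume.restrict S) := by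
    rw [integrable_indicator_iff measurableSet_Ioo]
    refine integrableOn_const (ne_of_lt ?_)
    exact lt_of_le_of_lt (Measure.restrict_apply_le S T) measure_Ioo_lt_top
  rw [hG]
  rw [integral_add hint1 hint2]
  rw [integral_indicator measurableSet_Ioo]
  have hrr : ∫ η in T, (fun _ : ℝ => A - B) η ∂(volume.restrict S)
      = ∫ _η in T, (A - B) ∂volume := by
    rw [Measure.restrict_restrict measurableSet_Ioo,
      Set.inter_eq_self_of_subset_left hsub]
  rw [hrr]
  rw [setIntegral_const, setIntegral_const]
  rw [hS, hT, Real.volume_real_Ioc_of_le (by linarith), Real.volume_real_Ioo_of_le (by linarith)]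
  simp only [smul_eq_mul]
  ring

lemma floor_inner {c η : ℝ} (hc : 1 ≤ c) (h1 : -(c * Real.pi) < η) (h2 : η < Real.pi) :
    ⌊(Real.pi - η) / (2 * c * Real.pi)⌋ = 0 := by
  have hπ := Real.pi_pos
  have hc0 : (0:ℝ) < c := lt_of_lt_of_le one_pos hc
  have hpos : (0:ℝ) < 2 * c * Real.pi := by positivity
  rw [Int.floor_eq_iff]
  constructor
  · rw [le_div_iff₀ hpos]; push_cast; nlinarith
  · rw [div_lt_iff₀ hpos]; push_cast; nlinarith

lemma floor_outer {c η : ℝ} (hc : 0 < c) (h1 : Real.pi < η) (h2 : η < c * Real.pi) :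
    ⌊(Real.pi - η) / (2 * c * Real.pi)⌋ = -1 := by
  have hπ := Real.pi_pos
  have hpos : (0:ℝ) < 2 * c * Real.pi := by positivity
  rw [Int.floor_eq_iff]
  constructor
  · rw [le_div_iff₀ hpos]; push_cast; nlinarith
  · rw [div_lt_iff₀ hpos]; push_cast; nlinarith

lemma floor_key {c : ℝ} (hc : 0 < c) (hc1 : c < 1) {η : ℝ}
    (h1 : -(c * Real.pi) < η) (h2 : η < c * Real.pi) :
    ⌊(Real.pi - η) / (2 * c * Real.pi)⌋ =
      if η ≤ Real.pi * (1 - 2 * c * (1 + (⌊(1 - c) / (2 * c)⌋ : ℝ)))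
      then ⌊(1 - c) / (2 * c)⌋ + 1 else ⌊(1 - c) / (2 * c)⌋ := by
  have hπ := Real.pi_pos
  have hpos : (0:ℝ) < 2 * c * Real.pi := by positivity
  have hc2 : (0:ℝ) < 2 * c := by linarith
  set m : ℤ := ⌊(1 - c) / (2 * c)⌋ with hm
  have hA : 2 * c * (m : ℝ) ≤ 1 - c := by
    have := Int.floor_le ((1 - c) / (2 * c))
    rw [le_div_iff₀ hc2] at this; linarith
  have hB : 1 - c < 2 * c * ((m : ℝ) + 1) := by
    have := Int.lt_floor_add_one ((1 - c) / (2 * c))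
    rw [div_lt_iff₀ hc2] at this; push_cast at this; linarith
  split_ifs with hle
  · rw [Int.floor_eq_iff]
    constructor
    · rw [le_div_iff₀ hpos]; push_cast; nlinarith
    · rw [div_lt_iff₀ hpos]; push_cast; nlinarith
  · push_neg at hle
    rw [Int.floor_eq_iff]
    constructor
    · rw [le_div_iff₀ hpos]; push_cast; nlinarith
    · rw [div_lt_iff₀ hpos]; push_cast; nlinarith

/-- **Example 6.1** (Shannon father wavelet): `I(c) = 2π` for `c ≥ 1`, while
for `0 < c < 1`, with `n* = ⌊(1−c)/(2c)⌋` and `η* = π(1 − 2c(1+n*))`,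
`I(c) = 2|η*|(2n*+2+sign(η*))² + 2(cπ−|η*|)(2n*+2)²`. -/
theorem shannonI_eval :
    (∀ c : ℝ, 1 ≤ c → shannonI c = 2 * Real.pi) ∧
    (∀ c : ℝ, 0 < c → c < 1 →
      shannonI c =
        2 * |Real.pi * (1 - 2 * c * (1 + (⌊(1 - c) / (2 * c)⌋ : ℝ)))| *
          (2 * (⌊(1 - c) / (2 * c)⌋ : ℝ) + 2 +
            Real.sign (Real.pi * (1 - 2 * c * (1 + (⌊(1 - c) / (2 * c)⌋ : ℝ))))) ^ 2 +
        2 * (c * Real.pi -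
            |Real.pi * (1 - 2 * c * (1 + (⌊(1 - c) / (2 * c)⌋ : ℝ)))|) *
          (2 * (⌊(1 - c) / (2 * c)⌋ : ℝ) + 2) ^ 2) := by
  have hπ := Real.pi_pos
  constructor
  · -- c ≥ 1
    intro c hc
    have hc0 : (0:ℝ) < c := lt_of_lt_of_le one_pos hc
    have hcπ : Real.pi ≤ c * Real.pi := by nlinarith
    have hmid : ∀ η : ℝ, -Real.pi < η → η < Real.pi →
        (∑' n : ℤ, shannonHat (η + 2 * (n : ℝ) * c * Real.pi)) ^ 2 = 1 := by
      intro η hη1 hη2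
      rw [tsum_eq_card c η hc0]
      have e1 : ⌊(Real.pi - η) / (2 * c * Real.pi)⌋ = 0 :=
        floor_inner hc (by nlinarith) hη2
      have e2 : ⌊(Real.pi + η) / (2 * c * Real.pi)⌋ = 0 := by
        rw [show Real.pi + η = Real.pi - (-η) by ring]
        exact floor_inner hc (by nlinarith) (by nlinarith)
      rw [e1, e2, neg_zero, card_Icc_real 0 0 le_rfl]
      norm_num
    have hout : ∀ η : ℝ, -(c * Real.pi) < η → η < c * Real.pi → Real.pi < |η| →
        (∑' n : ℤ, shannonHat (η + 2 * (n : ℝ) * c * Real.pi)) ^ 2 = 0 := by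
      intro η hη1 hη2 hgt
      rw [tsum_eq_card c η hc0]
      rcases le_or_gt 0 η with h0 | h0
      · have hπη : Real.pi < η := by rwa [abs_of_nonneg h0] at hgt
        have e1 : ⌊(Real.pi - η) / (2 * c * Real.pi)⌋ = -1 := floor_outer hc0 hπη hη2
        have e2 : ⌊(Real.pi + η) / (2 * c * Real.pi)⌋ = 0 := by
          rw [show Real.pi + η = Real.pi - (-η) by ring]
          exact floor_inner hc (by nlinarith) (by nlinarith)
        rw [e1, e2, neg_zero, Finset.Icc_eq_empty (by norm_num)]
        norm_num
      · have hπη : Real.pi < -η := by rwa [abs_of_neg h0] at hgt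
        have e1 : ⌊(Real.pi - η) / (2 * c * Real.pi)⌋ = 0 :=
          floor_inner hc hη1 (by nlinarith)
        have e2 : ⌊(Real.pi + η) / (2 * c * Real.pi)⌋ = -1 := by
          rw [show Real.pi + η = Real.pi - (-η) by ring]
          exact floor_outer hc0 hπη (by nlinarith)
        rw [e1, e2, Finset.Icc_eq_empty (by norm_num)]
        norm_num
    rw [shannonI, integral_helper _ c Real.pi 1 0 hc0 hπ.le hcπ hmid hout]
    ring
  · -- 0 < c < 1
    intro c hc0 hc1
    have hc2 : (0:ℝ) < 2 * c := by linarith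
    set m : ℤ := ⌊(1 - c) / (2 * c)⌋ with hmdef
    set e : ℝ := Real.pi * (1 - 2 * c * (1 + (m : ℝ))) with hedef
    have hA : 2 * c * (m : ℝ) ≤ 1 - c := by
      have := Int.floor_le ((1 - c) / (2 * c))
      rw [le_div_iff₀ hc2] at this
      rw [hmdef]; linarith
    have hB : 1 - c < 2 * c * ((m : ℝ) + 1) := by
      have := Int.lt_floor_add_one ((1 - c) / (2 * c))
      rw [div_lt_iff₀ hc2] at this
      rw [hmdef]; push_cast; push_cast at this; linarith
    have hm0 : (0:ℤ) ≤ m := by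
      rw [hmdef]; exact Int.floor_nonneg.mpr (div_nonneg (by linarith) (by linarith))
    have he1 : e < c * Real.pi := by rw [hedef]; nlinarith
    have he2 : -(c * Real.pi) ≤ e := by rw [hedef]; nlinarith
    have habs : |e| ≤ c * Real.pi := abs_le.mpr ⟨by linarith, he1.le⟩
    have hmid : ∀ η : ℝ, -|e| < η → η < |e| →
        (∑' n : ℤ, shannonHat (η + 2 * (n : ℝ) * c * Real.pi)) ^ 2
          = (2 * (m : ℝ) + 2 + Real.sign e) ^ 2 := by
      intro η hη1 hη2
      rw [tsum_eq_card c η hc0]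
      have hb1 : -(c * Real.pi) < η := by linarith
      have hb2 : η < c * Real.pi := lt_of_lt_of_le hη2 habs
      have f1 := floor_key hc0 hc1 hb1 hb2
      have f2 := floor_key hc0 hc1 (show -(c * Real.pi) < -η by linarith)
        (show -η < c * Real.pi by linarith)
      rw [show Real.pi - -η = Real.pi + η by ring] at f2
      rw [← hmdef, ← hedef] at f1 f2
      rcases lt_trichotomy e 0 with hs | hs | hs
      · have habse : |e| = -e := abs_of_neg hs
        rw [if_neg (by rw [habse] at hη1; intro hcon; linarith)] at f1
        rw [if_neg (by rw [habse] at hη2; intro hcon; linarith)] at f2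
        rw [f1, f2, card_Icc_real (-m) m (by omega), Real.sign_of_neg hs]
        push_cast; ring
      · exfalso; rw [hs, abs_zero] at hη1 hη2; linarith
      · have habse : |e| = e := abs_of_pos hs
        rw [if_pos (by rw [habse] at hη2; linarith)] at f1
        rw [if_pos (by rw [habse] at hη1; linarith)] at f2
        rw [f1, f2, card_Icc_real (-(m+1)) (m+1) (by omega), Real.sign_of_pos hs]
        push_cast; ring
    have hout : ∀ η : ℝ, -(c * Real.pi) < η → η < c * Real.pi → |e| < |η| →
        (∑' n : ℤ, shannonHat (η + 2 * (n : ℝ) * c * Real.pi)) ^ 2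
          = (2 * (m : ℝ) + 2) ^ 2 := by
      intro η hη1 hη2 hgt
      rw [tsum_eq_card c η hc0]
      have f1 := floor_key hc0 hc1 hη1 hη2
      have f2 := floor_key hc0 hc1 (show -(c * Real.pi) < -η by linarith)
        (show -η < c * Real.pi by linarith)
      rw [show Real.pi - -η = Real.pi + η by ring] at f2
      rw [← hmdef, ← hedef] at f1 f2
      rcases le_or_gt 0 η with h0 | h0
      · have hgt' : |e| < η := by rwa [abs_of_nonneg h0] at hgt
        rw [if_neg (not_le.mpr (lt_of_le_of_lt (le_abs_self e) hgt'))] at f1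
        rw [if_pos (by linarith [neg_abs_le e])] at f2
        rw [f1, f2, card_Icc_real (-(m+1)) m (by omega)]
        push_cast; ring
      · have hgt' : |e| < -η := by rwa [abs_of_neg h0] at hgt
        rw [if_pos (by linarith [neg_abs_le e])] at f1
        rw [if_neg (not_le.mpr (lt_of_le_of_lt (le_abs_self e) hgt'))] at f2
        rw [f1, f2, card_Icc_real (-m) (m+1) (by omega)]
        push_cast; ring
    rw [shannonI, integral_helper _ c (|e|)
      ((2 * (m : ℝ) + 2 + Real.sign e) ^ 2) ((2 * (m : ℝ) + 2) ^ 2)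
      hc0 (abs_nonneg e) habs hmid hout]
    ring
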